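/- arXiv:2108.04999 — 7 statements merged into one kernel-verified Lean document; each statement's English description precedes it below -/
import Mathlib

section
/- Let P be a closed convex cone in ℝ^d with nonempty interior Ω and let V be an isometric representation of P on a Hilbert space H (a semigroup of isometries V_x with V_x V_y = V_{x+y}). Define, for a ∈ Ω, the sesquilinear form ⟨ξ, η⟩_a := ⟨ξ_a, η_a⟩ on the space A(V) of additive cocycles of V. Then ⟨·,·⟩_a is a genuine inner product on A(V): if ⟨ξ, ξ⟩_a = 0 for some a ∈ Ω then ξ_x = 0 for all x ∈ P. -/
theorem inner_product_on_additive_cocycles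
    {d : ℕ} (P : Set (EuclideanSpace ℝ (Fin d)))
    (hclosed : IsClosed P) (h0 : (0 : EuclideanSpace ℝ (Fin d)) ∈ P)
    (hadd : ∀ x ∈ P, ∀ y ∈ P, x + y ∈ P)
    (hsmul : ∀ t : ℝ, 0 ≤ t → ∀ x ∈ P, t • x ∈ P)
    (hint : (interior P).Nonempty)
    {H : Type*} [NormedAddCommGroup H] [InnerProductSpace ℂ H] [CompleteSpace H]
    (V : EuclideanSpace ℝ (Fin d) → (H →L[ℂ] H))
    (hViso : ∀ x ∈ P, ∀ h : H, ‖V x h‖ = ‖h‖)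
    (hVsemi : ∀ x ∈ P, ∀ y ∈ P, (V x).comp (V y) = V (x + y))
    (ξ : EuclideanSpace ℝ (Fin d) → H)
    (hξcont : ContinuousOn ξ P)
    (hξker : ∀ x ∈ P, ContinuousLinearMap.adjoint (V x) (ξ x) = 0)
    (hξcoc : ∀ x ∈ P, ∀ y ∈ P, ξ (x + y) = ξ x + V x (ξ y))
    (a : EuclideanSpace ℝ (Fin d)) (ha : a ∈ interior P)
    (hzero : (inner ℂ (ξ a) (ξ a) : ℂ) = 0) :
    ∀ x ∈ P, ξ x = 0 := by
  have haP : a ∈ P := interior_subset ha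
  have hξa : ξ a = 0 := inner_self_eq_zero.mp hzero
  -- ξ 0 = 0
  have hξ0 : ξ 0 = 0 := by
    have h := hξcoc 0 h0 0 h0
    rw [add_zero] at h
    have hv : V 0 (ξ 0) = 0 := (left_eq_add.mp h)
    have := hViso 0 h0 (ξ 0)
    rw [hv, norm_zero] at this
    exact norm_eq_zero.mp this.symm
  -- ξ (n • a) = 0 for all n
  have hn : ∀ n : ℕ, ((n : ℝ) • a ∈ P) ∧ ξ ((n : ℝ) • a) = 0 := by
    intro n
    induction n with
    | zero => simpa using ⟨h0, hξ0⟩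
    | succ n ih =>
      have heq : ((n + 1 : ℕ) : ℝ) • a = (n : ℝ) • a + a := by
        push_cast
        rw [add_smul, one_smul]
      constructor
      · rw [heq]; exact hadd _ ih.1 _ haP
      · rw [heq, hξcoc _ ih.1 a haP, ih.2, hξa, map_zero, add_zero]
  intro x hx
  -- Archimedean: find n with n • a - x ∈ P
  obtain ⟨ε, hε, hball⟩ := Metric.mem_nhds_iff.mp (mem_interior_iff_mem_nhds.mp ha)
  obtain ⟨n, hnn⟩ := exists_nat_gt (‖x‖ / ε)
  have hn0 : 0 < (n : ℝ) := lt_of_le_of_lt (div_nonneg (norm_nonneg x) hε.le) hnn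
  have hbP : a - (n : ℝ)⁻¹ • x ∈ P := by
    apply hball
    rw [Metric.mem_ball, dist_eq_norm]
    have : a - (n : ℝ)⁻¹ • x - a = -((n : ℝ)⁻¹ • x) := by abel
    rw [this, norm_neg, norm_smul, norm_inv, Real.norm_natCast]
    rw [inv_mul_lt_iff₀ hn0]
    calc ‖x‖ = (‖x‖ / ε) * ε := by field_simp
    _ < n * ε := by exact mul_lt_mul_of_pos_right hnn hε
  have hzP : (n : ℝ) • a - x ∈ P := by
    have := hsmul (n : ℝ) hn0.le _ hbP
    rwa [smul_sub, smul_inv_smul₀ hn0.ne'] at this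
  -- cocycle identity at x + ((n•a) - x)
  have hsum : x + ((n : ℝ) • a - x) = (n : ℝ) • a := by abel
  have hco := hξcoc x hx _ hzP
  rw [hsum, (hn n).2] at hco
  have h2 : ξ x + V x (ξ ((n : ℝ) • a - x)) = 0 := hco.symm
  have h3 : (inner ℂ (ξ x) (ξ x + V x (ξ ((n : ℝ) • a - x))) : ℂ) = 0 := by
    rw [h2, inner_zero_right]
  rw [inner_add_right] at h3
  have h4 : (inner ℂ (ξ x) (V x (ξ ((n : ℝ) • a - x))) : ℂ) = 0 := by
    rw [← ContinuousLinearMap.adjoint_inner_left, hξker x hx, inner_zero_left]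
  rw [h4, add_zero] at h3
  exact inner_self_eq_zero.mp h3
end

section
/- Let P be a closed convex cone in ℝ^d with nonempty interior Ω, and let V be an isometric representation of P on a Hilbert space H. For any two interior points a, b ∈ Ω, the norms on the space of additive cocycles A(V) given by ‖ξ‖_a := ‖ξ_a‖ and ‖ξ‖_b := ‖ξ_b‖ are equivalent: there exist positive constants c, C such that c‖ξ‖_b ≤ ‖ξ‖_a ≤ C‖ξ‖_b for all ξ ∈ A(V). -/
open scoped InnerProductSpace

/-- Archimedean property of a cone with interior point. -/
lemma cone_archimedean {d : ℕ} (P : Set (EuclideanSpace ℝ (Fin d)))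
    (hadd : ∀ x ∈ P, ∀ y ∈ P, x + y ∈ P)
    (hsmul : ∀ t : ℝ, 0 ≤ t → ∀ x ∈ P, t • x ∈ P)
    (a b : EuclideanSpace ℝ (Fin d)) (ha : a ∈ interior P) (_hb : b ∈ P) :
    ∃ k : ℕ, 0 < k ∧ (k : ℝ) • a - b ∈ P := by
  obtain ⟨ε, hε, hball⟩ := Metric.mem_nhds_iff.mp (mem_interior_iff_mem_nhds.mp ha)
  set t : ℝ := ε / (2 * (‖b‖ + 1)) with ht
  have hbpos : (0:ℝ) < ‖b‖ + 1 := by positivity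
  have htpos : 0 < t := by positivity
  have hmem : a - t • b ∈ P := by
    apply hball
    simp only [Metric.mem_ball, dist_eq_norm]
    have : a - t • b - a = -(t • b) := by abel
    rw [this, norm_neg, norm_smul, Real.norm_eq_abs, abs_of_pos htpos]
    calc t * ‖b‖ ≤ t * (‖b‖ + 1) := by nlinarith
    _ = ε / 2 := by
      rw [ht, div_mul_eq_mul_div, div_eq_div_iff (by positivity) two_ne_zero]; ring
    _ < ε := by linarith
  refine ⟨⌈1/t⌉₊ + 1, Nat.succ_pos _, ?_⟩
  have hk : 1/t ≤ ((⌈1/t⌉₊ + 1 : ℕ) : ℝ) := by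
    push_cast
    have := Nat.le_ceil (1/t)
    linarith
  have key : ((⌈1/t⌉₊ + 1 : ℕ) : ℝ) • a - b
      = (((⌈1/t⌉₊ + 1 : ℕ) : ℝ) - 1/t) • a + (1/t) • (a - t • b) := by
    rw [smul_sub, sub_smul, smul_smul]
    rw [one_div, inv_mul_cancel₀ (ne_of_gt htpos), one_smul]
    abel
  rw [key]
  exact hadd _ (hsmul _ (by linarith) _ (interior_subset ha)) _
    (hsmul _ (by positivity) _ hmem)

theorem equivalent_norms_on_additive_cocycles
    {d : ℕ} (P : Set (EuclideanSpace ℝ (Fin d)))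
    (hclosed : IsClosed P) (h0 : (0 : EuclideanSpace ℝ (Fin d)) ∈ P)
    (hadd : ∀ x ∈ P, ∀ y ∈ P, x + y ∈ P)
    (hsmul : ∀ t : ℝ, 0 ≤ t → ∀ x ∈ P, t • x ∈ P)
    (hint : (interior P).Nonempty)
    {H : Type*} [NormedAddCommGroup H] [InnerProductSpace ℂ H] [CompleteSpace H]
    (V : EuclideanSpace ℝ (Fin d) → (H →L[ℂ] H))
    (hViso : ∀ x ∈ P, ∀ h : H, ‖V x h‖ = ‖h‖)
    (hVsemi : ∀ x ∈ P, ∀ y ∈ P, (V x).comp (V y) = V (x + y))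
    (a b : EuclideanSpace ℝ (Fin d)) (ha : a ∈ interior P) (hb : b ∈ interior P) :
    ∃ c C : ℝ, 0 < c ∧ 0 < C ∧
      ∀ ξ : EuclideanSpace ℝ (Fin d) → H,
        ContinuousOn ξ P →
        (∀ x ∈ P, ContinuousLinearMap.adjoint (V x) (ξ x) = 0) →
        (∀ x ∈ P, ∀ y ∈ P, ξ (x + y) = ξ x + V x (ξ y)) →
        c * ‖ξ b‖ ≤ ‖ξ a‖ ∧ ‖ξ a‖ ≤ C * ‖ξ b‖ := by
  have hPa : a ∈ P := interior_subset ha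
  have hPb : b ∈ P := interior_subset hb
  obtain ⟨k, hkpos, hkP⟩ := cone_archimedean P hadd hsmul a b ha hPb
  obtain ⟨m, hmpos, hmP⟩ := cone_archimedean P hadd hsmul b a hb hPa
  refine ⟨(Real.sqrt k)⁻¹, Real.sqrt m, by positivity, by positivity, ?_⟩
  intro ξ _ hker hcoc
  -- Pythagoras
  have pyth : ∀ x ∈ P, ∀ y ∈ P, ‖ξ (x + y)‖ ^ 2 = ‖ξ x‖ ^ 2 + ‖ξ y‖ ^ 2 := by
    intro x hx y hy
    have hinner : ⟪ξ x, V x (ξ y)⟫_ℂ = 0 := by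
      rw [← ContinuousLinearMap.adjoint_inner_left, hker x hx, inner_zero_left]
    have := norm_add_sq_eq_norm_sq_add_norm_sq_of_inner_eq_zero (𝕜 := ℂ)
      (ξ x) (V x (ξ y)) hinner
    rw [hcoc x hx y hy]
    rw [hViso x hx (ξ y)] at this
    nlinarith [this]
  -- scaling
  have scal : ∀ n : ℕ, (n : ℝ) • a ∈ P ∧ ‖ξ ((n : ℝ) • a)‖ ^ 2 = n * ‖ξ a‖ ^ 2 := by
    intro n
    induction n with
    | zero =>
      have h00 := pyth 0 h0 0 h0
      simp only [add_zero] at h00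
      constructor
      · simpa using h0
      · simp only [Nat.cast_zero, zero_smul, zero_mul]
        nlinarith [h00]
    | succ n ih =>
      have hmem : ((n : ℝ) + 1) • a = (n : ℝ) • a + a := by
        rw [add_smul, one_smul]
      constructor
      · push_cast; rw [hmem]; exact hadd _ ih.1 _ hPa
      · push_cast
        rw [hmem, pyth _ ih.1 _ hPa, ih.2]; ring
  have hbnd : ∀ (x : EuclideanSpace ℝ (Fin d)) (n : ℕ), x ∈ P → (n : ℝ) • x - b ∈ P →
      ‖ξ b‖ ^ 2 ≤ ‖ξ ((n : ℝ) • x)‖ ^ 2 := by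
    intro x n hx hxb
    have heq : (n : ℝ) • x = b + ((n : ℝ) • x - b) := by abel
    calc ‖ξ b‖ ^ 2 ≤ ‖ξ b‖ ^ 2 + ‖ξ ((n : ℝ) • x - b)‖ ^ 2 :=
        le_add_of_nonneg_right (by positivity)
    _ = ‖ξ ((n : ℝ) • x)‖ ^ 2 := by rw [heq, pyth b hPb _ hxb, add_sub_cancel_left]
  -- b bounded by a
  have h1 : ‖ξ b‖ ^ 2 ≤ (k : ℝ) * ‖ξ a‖ ^ 2 := by
    have := hbnd a k hPa hkP
    rw [(scal k).2] at this
    exact this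
  have h2 : ‖ξ a‖ ^ 2 ≤ (m : ℝ) * ‖ξ b‖ ^ 2 := by
    -- symmetric version: need pyth with a,b swapped
    have heq : (m : ℝ) • b = a + ((m : ℝ) • b - a) := by abel
    have hmb : (m : ℝ) • b ∈ P := by
      have := (fun n => by
        induction n with
        | zero => simpa using h0
        | succ n ih => push_cast; rw [add_smul, one_smul]; exact hadd _ ih _ hPb :
        ∀ n : ℕ, (n : ℝ) • b ∈ P) m
      exact this
    have hle : ‖ξ a‖ ^ 2 ≤ ‖ξ ((m : ℝ) • b)‖ ^ 2 := by
      calc ‖ξ a‖ ^ 2 ≤ ‖ξ a‖ ^ 2 + ‖ξ ((m : ℝ) • b - a)‖ ^ 2 :=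
          le_add_of_nonneg_right (by positivity)
      _ = ‖ξ ((m : ℝ) • b)‖ ^ 2 := by rw [heq, pyth a hPa _ hmP, add_sub_cancel_left]
    have scalb : ∀ n : ℕ, (n : ℝ) • b ∈ P ∧ ‖ξ ((n : ℝ) • b)‖ ^ 2 = n * ‖ξ b‖ ^ 2 := by
      intro n
      induction n with
      | zero =>
        have h00 := pyth 0 h0 0 h0
        simp only [add_zero] at h00
        refine ⟨by simpa using h0, ?_⟩
        simp only [Nat.cast_zero, zero_smul, zero_mul]
        nlinarith [h00]
      | succ n ih =>
        have hmem : ((n : ℝ) + 1) • b = (n : ℝ) • b + b := by rw [add_smul, one_smul]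
        refine ⟨by push_cast; rw [hmem]; exact hadd _ ih.1 _ hPb, ?_⟩
        push_cast
        rw [hmem, pyth _ ih.1 _ hPb, ih.2]; ring
    rw [(scalb m).2] at hle
    exact hle
  constructor
  · -- (√k)⁻¹ * ‖ξ b‖ ≤ ‖ξ a‖
    have hk0 : (0:ℝ) < Real.sqrt k := by positivity
    rw [inv_mul_le_iff₀ hk0]
    have : ‖ξ b‖ = Real.sqrt (‖ξ b‖ ^ 2) := (Real.sqrt_sq (norm_nonneg _)).symm
    rw [this]
    calc Real.sqrt (‖ξ b‖ ^ 2) ≤ Real.sqrt ((k : ℝ) * ‖ξ a‖ ^ 2) := Real.sqrt_le_sqrt h1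
    _ = Real.sqrt k * ‖ξ a‖ := by
        rw [Real.sqrt_mul (by positivity), Real.sqrt_sq (norm_nonneg _)]
  · have : ‖ξ a‖ = Real.sqrt (‖ξ a‖ ^ 2) := (Real.sqrt_sq (norm_nonneg _)).symm
    rw [this]
    calc Real.sqrt (‖ξ a‖ ^ 2) ≤ Real.sqrt ((m : ℝ) * ‖ξ b‖ ^ 2) := Real.sqrt_le_sqrt h2
    _ = Real.sqrt m * ‖ξ b‖ := by
        rw [Real.sqrt_mul (by positivity), Real.sqrt_sq (norm_nonneg _)]
end

section
/- Let G be a topological group with a subsemigroup P containing the identity e, and let Ω be the interior of P. Assume Ω is nonempty, Ω·Ω⁻¹ = G (equivalently every element of G can be written as a·b⁻¹ with a, b ∈ Ω), Ω·P ⊆ Ω, P·Ω ⊆ Ω, and G is second countable. Then there exists a sequence (a_k) in Ω with a_k < a_{k+1} (i.e. a_k⁻¹ a_{k+1} ∈ Ω) which is cofinal: for every g ∈ G there exists k with g < a_k (i.e. g⁻¹ a_k ∈ Ω). -/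
theorem exists_increasing_cofinal_sequence
    {G : Type*} [Group G] [TopologicalSpace G] [IsTopologicalGroup G]
    [SecondCountableTopology G]
    (P : Set G) (hone : (1 : G) ∈ P)
    (hmul : ∀ x ∈ P, ∀ y ∈ P, x * y ∈ P)
    (hΩne : (interior P).Nonempty)
    (hΩG : ∀ g : G, ∃ a ∈ interior P, ∃ b ∈ interior P, g = a * b⁻¹)
    (hΩP : ∀ w ∈ interior P, ∀ p ∈ P, w * p ∈ interior P)
    (hPΩ : ∀ p ∈ P, ∀ w ∈ interior P, p * w ∈ interior P) :
    ∃ a : ℕ → G, (∀ k, a k ∈ interior P) ∧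
      (∀ k, (a k)⁻¹ * a (k + 1) ∈ interior P) ∧
      (∀ g : G, ∃ k, g⁻¹ * a k ∈ interior P) := by
  classical
  obtain ⟨ω, hω⟩ := hΩne
  -- choose join witnesses
  choose fa hfa fb hfb hfab using fun (u v : G) => hΩG (u⁻¹ * v)
  have key : ∀ u v : G, u * fa u v = v * fb u v := by
    intro u v
    have h := hfab u v
    have h2 : u * (u⁻¹ * v) * fb u v = u * (fa u v * (fb u v)⁻¹) * fb u v := by rw [h]
    group at h2
    exact h2.symm
  -- dense sequence
  set d := TopologicalSpace.denseSeq G with hd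
  have hdense := TopologicalSpace.denseRange_denseSeq G
  set c : ℕ → G := fun n => if d n ∈ interior P then d n else ω with hc
  have hcΩ : ∀ n, c n ∈ interior P := by
    intro n; simp only [hc]; split <;> simp_all
  have hcover : ∀ g : G, ∃ n, g⁻¹ * c n ∈ interior P := by
    intro g
    obtain ⟨a, ha, b, hb, hab⟩ := hΩG g
    have hga : g⁻¹ * a = b := by rw [hab]; group
    have hV : IsOpen ({x : G | g⁻¹ * x ∈ interior P} ∩ interior P) := by
      apply IsOpen.inter _ isOpen_interior
      have : Continuous fun x : G => g⁻¹ * x := continuous_const.mul continuous_id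
      exact isOpen_interior.preimage this
    have hne : (({x : G | g⁻¹ * x ∈ interior P} ∩ interior P)).Nonempty :=
      ⟨a, by simp [hga, hb], ha⟩
    obtain ⟨n, hn⟩ := hdense.exists_mem_open hV hne
    refine ⟨n, ?_⟩
    have hdn : d n ∈ interior P := hn.2
    have : c n = d n := by simp [hc, hdn]
    rw [this]; exact hn.1
  -- recursive sequence
  set A : ℕ → G := fun n => Nat.rec (c 0) (fun k x => x * fa x (c (k+1))) n with hA
  have hA0 : A 0 = c 0 := rfl
  have hAs : ∀ k, A (k+1) = A k * fa (A k) (c (k+1)) := fun k => rfl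
  have hAΩ : ∀ k, A k ∈ interior P := by
    intro k
    induction k with
    | zero => rw [hA0]; exact hcΩ 0
    | succ k ih =>
        rw [hAs k]
        exact hΩP _ ih _ (interior_subset (hfa (A k) (c (k+1))))
  have hstep : ∀ k, (A k)⁻¹ * A (k+1) ∈ interior P := by
    intro k
    rw [hAs k]
    have : (A k)⁻¹ * (A k * fa (A k) (c (k+1))) = fa (A k) (c (k+1)) := by group
    rw [this]; exact hfa _ _
  have hcA : ∀ n, (c n)⁻¹ * A n ∈ P := by
    intro n
    cases n with
    | zero => rw [hA0]; simpa using hone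
    | succ k =>
        rw [hAs k, key (A k) (c (k+1))]
        have : (c (k+1))⁻¹ * (c (k+1) * fb (A k) (c (k+1))) = fb (A k) (c (k+1)) := by
          group
        rw [this]; exact interior_subset (hfb _ _)
  refine ⟨A, hAΩ, hstep, fun g => ?_⟩
  obtain ⟨n, hn⟩ := hcover g
  refine ⟨n, ?_⟩
  have : g⁻¹ * A n = (g⁻¹ * c n) * ((c n)⁻¹ * A n) := by group
  rw [this]
  exact hΩP _ hn _ (hcA n)
end

section
/- Let G be a topological group with Lie semigroup P (closed subsemigroup containing e, interior Ω dense in P, PP⁻¹ = P⁻¹P = G), and let A be a P-space with P ⊆ A. Let a ∈ Ω, x ∈ ∂A (the boundary of A), and b ∈ G with e < b < a (i.e. b ∈ Ω and b⁻¹a ∈ Ω). Then b·x ∈ int(A) \ a·A. -/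
theorem boundary_point_translate_in_interior_minus_translate
    {G : Type*} [Group G] [TopologicalSpace G] [IsTopologicalGroup G]
    (P : Set G) (hone : (1 : G) ∈ P) (hPclosed : IsClosed P)
    (hmul : ∀ x ∈ P, ∀ y ∈ P, x * y ∈ P)
    (hdense : P ⊆ closure (interior P))
    (hΩΩ : ∀ u ∈ interior P, ∀ v ∈ interior P, u * v ∈ interior P)
    (A : Set G) (hAne : A.Nonempty) (hAproper : A ≠ Set.univ)
    (hAclosed : IsClosed A)
    (hPA : ∀ p ∈ P, ∀ x ∈ A, p * x ∈ A)
    (hPsubA : P ⊆ A)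
    (hΩA : ∀ w ∈ interior P, ∀ y ∈ A, w * y ∈ interior A)
    (a : G) (haΩ : a ∈ interior P)
    (x : G) (hx : x ∈ frontier A)
    (b : G) (hb : b ∈ interior P) (hba : b⁻¹ * a ∈ interior P) :
    b * x ∈ interior A ∧ b * x ∉ (fun y => a * y) '' A := by
  have hxA : x ∈ A := hAclosed.closure_eq ▸ hx.1
  have hxnI : x ∉ interior A := hx.2
  refine ⟨hΩA b hb x hxA, ?_⟩
  rintro ⟨y, hy, hxy⟩
  apply hxnI
  have hx' : x = b⁻¹ * a * y := by
    simp only [] at hxy; rw [mul_assoc, hxy, inv_mul_cancel_left]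
  rw [hx']
  exact hΩA _ hba y hy
end

section
/- Let G be a locally compact group, E ⊆ G a compact set with nonempty interior, and (x_n) a sequence in G with no convergent subsequence. Then there exists a subsequence (x_{n_k}) such that the translates E·x_{n_k} are pairwise disjoint. -/
open scoped Pointwise


theorem exists_disjoint_translates_subsequence
    {G : Type*} [Group G] [TopologicalSpace G] [IsTopologicalGroup G]
    [LocallyCompactSpace G] [SecondCountableTopology G] [T2Space G]
    (E : Set G) (hE : IsCompact E) (hEint : (interior E).Nonempty)
    (x : ℕ → G)
    (hx : ¬ ∃ (g : G) (φ : ℕ → ℕ), StrictMono φ ∧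
      Filter.Tendsto (x ∘ φ) Filter.atTop (nhds g)) :
    ∃ φ : ℕ → ℕ, StrictMono φ ∧
      ∀ k m, k ≠ m →
        ((fun g => g * x (φ k)) '' E) ∩ ((fun g => g * x (φ m)) '' E) = ∅ := by
  classical
  -- x escapes every compact set
  have escape : ∀ K : Set G, IsCompact K → {n | x n ∈ K}.Finite := by
    intro K hK
    by_contra hinf
    have hmem : ∀ k, x (Nat.nth (fun n => x n ∈ K) k) ∈ K := fun k =>
      Nat.nth_mem_of_infinite (hinf : _root_.Set.Infinite _) k
    obtain ⟨a, _, ψ, hψ, hconv⟩ := hK.isSeqCompact hmem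
    exact hx ⟨a, (Nat.nth (fun n => x n ∈ K)) ∘ ψ,
      (Nat.nth_strictMono (hinf : _root_.Set.Infinite _)).comp hψ, hconv⟩
  set K : Set G := E⁻¹ * E with hKdef
  have hKcomp : IsCompact K := hE.inv.mul hE
  have hKsymm : K⁻¹ = K := by
    rw [hKdef, mul_inv_rev, inv_inv]
  -- choice of next index
  have step : ∀ N : ℕ, ∃ n, N < n ∧ ∀ j ≤ N, x n * (x j)⁻¹ ∉ K := by
    intro N
    have hS : {n | ∃ j ≤ N, x n * (x j)⁻¹ ∈ K}.Finite := by
      have hsub : {n | ∃ j ≤ N, x n * (x j)⁻¹ ∈ K} ⊆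
          ⋃ j ∈ Finset.range (N + 1), {n | x n ∈ (fun g => g * x j) '' K} := by
        intro n ⟨j, hj, hmem⟩
        refine Set.mem_biUnion (Finset.mem_range.mpr (Nat.lt_succ_of_le hj)) ?_
        exact ⟨x n * (x j)⁻¹, hmem, by group⟩
      refine Set.Finite.subset ?_ hsub
      refine Set.Finite.biUnion (Finset.range (N + 1)).finite_toSet fun j _ => ?_
      exact escape _ (hKcomp.image (continuous_id.mul continuous_const))
    obtain ⟨b, hb⟩ := hS.bddAbove
    refine ⟨max N b + 1, lt_of_le_of_lt (le_max_left _ _) (Nat.lt_succ_self _), ?_⟩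
    intro j hj hmem
    have : max N b + 1 ≤ b := hb ⟨j, hj, hmem⟩
    omega
  choose next hnext1 hnext2 using step
  set φ : ℕ → ℕ := fun k => next^[k] 0 with hφdef
  have hstep : ∀ k, φ (k + 1) = next (φ k) := fun k =>
    Function.iterate_succ_apply' next k 0
  have hmono : StrictMono φ := strictMono_nat_of_lt_succ fun k => by
    rw [hstep]; exact hnext1 (φ k)
  have key : ∀ k m, m < k → x (φ k) * (x (φ m))⁻¹ ∉ K := by
    intro k m hmk
    obtain ⟨k', rfl⟩ : ∃ k', k = k' + 1 := ⟨k - 1, by omega⟩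
    rw [hstep]
    exact hnext2 (φ k') (φ m) (hmono.monotone (by omega))
  refine ⟨φ, hmono, fun k m hkm => ?_⟩
  by_contra hne
  obtain ⟨z, ⟨g, hg, hgz⟩, ⟨h, hh, hhz⟩⟩ :=
    Set.nonempty_iff_ne_empty.mpr hne
  have h1 : g * x (φ k) = h * x (φ m) := hgz.trans hhz.symm
  have hK : x (φ k) * (x (φ m))⁻¹ ∈ K := by
    have h2 : x (φ k) * (x (φ m))⁻¹ = g⁻¹ * h := by
      calc x (φ k) * (x (φ m))⁻¹ = g⁻¹ * (g * x (φ k)) * (x (φ m))⁻¹ := by group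
        _ = g⁻¹ * (h * x (φ m)) * (x (φ m))⁻¹ := by rw [h1]
        _ = g⁻¹ * h := by group
    rw [hKdef, h2]
    exact Set.mul_mem_mul (Set.inv_mem_inv.mpr hg) hh
  rcases lt_or_gt_of_ne hkm with hlt | hlt
  · have : x (φ m) * (x (φ k))⁻¹ ∈ K := by
      rw [← hKsymm]
      simpa using Set.inv_mem_inv.mpr hK
    exact key m k hlt this
  · exact key k m hlt hK
end

section
/- Let G be a connected topological group homeomorphic to K × ℝⁿ where K is compact (Malcev–Iwasawa decomposition). Let P ⊆ G be a closed subsemigroup whose interior Ω is nonempty and does not have compact closure, and let A be a P-space containing P such that the complement Aᶜ contains a translate of Ω⁻¹ (in particular Aᶜ does not have compact closure). If the boundary ∂A is compact, then n = 1. -/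
open Metric Set

theorem my_isConnected_norm_gt {E : Type*} [NormedAddCommGroup E] [NormedSpace ℝ E]
    (hrank : 1 < Module.rank ℝ E) {R : ℝ} (hR : 0 ≤ R) :
    IsConnected {x : E | R < ‖x‖} := by
  have hsp : ∀ r : ℝ, R < r → IsPathConnected (sphere (0:E) r) := fun r hr =>
    isPathConnected_sphere hrank 0 (hR.trans hr.le)
  have hspS : ∀ r : ℝ, R < r → sphere (0:E) r ⊆ {x : E | R < ‖x‖} := by
    intro r hr x hx
    rw [mem_sphere_zero_iff_norm] at hx
    simpa [hx] using hr
  have hpc : IsPathConnected {x : E | R < ‖x‖} := by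
    obtain ⟨x0, hx0, -⟩ := hsp (R+1) (by linarith)
    have hx0norm : ‖x0‖ = R + 1 := mem_sphere_zero_iff_norm.mp hx0
    refine ⟨x0, hspS _ (by linarith) hx0, ?_⟩
    intro y hy
    have hyn : R < ‖y‖ := hy
    have hynpos : 0 < ‖y‖ := lt_of_le_of_lt hR hyn
    have hx0pos : 0 < ‖x0‖ := by rw [hx0norm]; linarith
    set z : E := (‖y‖ / ‖x0‖) • x0 with hz
    have hzn : ‖z‖ = ‖y‖ := by
      rw [hz, norm_smul, Real.norm_eq_abs, abs_of_pos (div_pos hynpos hx0pos),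
        div_mul_cancel₀ _ hx0pos.ne']
    have step1 : JoinedIn {x : E | R < ‖x‖} x0 z := by
      apply JoinedIn.of_segment_subset
      intro w hw
      obtain ⟨a, b, ha, hb, hab, rfl⟩ := hw
      have : a • x0 + b • z = (a + b * (‖y‖ / ‖x0‖)) • x0 := by
        rw [hz, smul_smul, ← add_smul]
      rw [this]
      have hc : min 1 (‖y‖ / ‖x0‖) ≤ a + b * (‖y‖ / ‖x0‖) := by
        rcases le_total 1 (‖y‖ / ‖x0‖) with hcase | hcase
        · have : min 1 (‖y‖ / ‖x0‖) = 1 := min_eq_left hcase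
          rw [this]
          nlinarith
        · have : min 1 (‖y‖ / ‖x0‖) = ‖y‖ / ‖x0‖ := min_eq_right hcase
          rw [this]
          nlinarith
      have hnorm : ‖(a + b * (‖y‖ / ‖x0‖)) • x0‖ = (a + b * (‖y‖ / ‖x0‖)) * ‖x0‖ := by
        rw [norm_smul, Real.norm_eq_abs, abs_of_nonneg]
        have : (0:ℝ) < min 1 (‖y‖ / ‖x0‖) := lt_min one_pos (div_pos hynpos hx0pos)
        linarith
      show R < _
      rw [hnorm]
      have hmin : min ‖x0‖ ‖y‖ ≤ (a + b * (‖y‖ / ‖x0‖)) * ‖x0‖ := by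
        calc min ‖x0‖ ‖y‖ = min 1 (‖y‖ / ‖x0‖) * ‖x0‖ := by
              rcases le_total ‖x0‖ ‖y‖ with hcase | hcase
              · rw [min_eq_left hcase, min_eq_left (by rwa [le_div_iff₀ hx0pos, one_mul]), one_mul]
              · rw [min_eq_right hcase, min_eq_right (by rwa [div_le_iff₀ hx0pos, one_mul]),
                  div_mul_cancel₀ _ hx0pos.ne']
          _ ≤ _ := by nlinarith
      have : R < min ‖x0‖ ‖y‖ := lt_min (by rw [hx0norm]; linarith) hyn
      linarith
    have step2 : JoinedIn {x : E | R < ‖x‖} z y := by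
      have h1 : z ∈ sphere (0:E) ‖y‖ := by rwa [mem_sphere_zero_iff_norm]
      have h2 : y ∈ sphere (0:E) ‖y‖ := by rw [mem_sphere_zero_iff_norm]
      exact ((hsp ‖y‖ hyn).joinedIn z h1 y h2).mono (hspS _ hyn)
    exact step1.trans step2
  exact hpc.isConnected

theorem my_main
    {G : Type*} [Group G] [TopologicalSpace G] [IsTopologicalGroup G]
    [ConnectedSpace G]
    {K : Type*} [TopologicalSpace K] [CompactSpace K]
    {n : ℕ} (h : G ≃ₜ K × EuclideanSpace ℝ (Fin n))
    (P : Set G)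
    (hΩnc : ¬ IsCompact (closure (interior P)))
    (A : Set G)
    (hAclosed : IsClosed A)
    (hPsubA : P ⊆ A)
    (hAc : ∃ g : G, {y : G | ∃ w ∈ interior P, y = g * w⁻¹} ⊆ Aᶜ)
    (hbd : IsCompact (frontier A)) :
    n = 1 := by
  match n, h with
  | 0, h =>
    haveI : CompactSpace (K × EuclideanSpace ℝ (Fin 0)) := inferInstance
    haveI : CompactSpace G := h.symm.compactSpace
    exact absurd isClosed_closure.isCompact hΩnc
  | 1, h => rfl
  | (m+2), h =>
    exfalso
    set E := EuclideanSpace ℝ (Fin (m+2))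
    have hrank : 1 < Module.rank ℝ E := by
      have h1 : (Module.finrank ℝ E : Cardinal) = Module.rank ℝ E :=
        Module.finrank_eq_rank ℝ E
      have h2 : Module.finrank ℝ E = m + 2 := finrank_euclideanSpace_fin
      rw [← h1, h2]
      norm_cast
      omega
    -- Bound on the frontier
    have hFcomp : IsCompact ((fun a => (h a).2) '' frontier A) :=
      hbd.image (continuous_snd.comp h.continuous)
    obtain ⟨R, hRsub⟩ := hFcomp.isBounded.subset_closedBall 0
    set R' : ℝ := max R 0 with hR'
    have hR'0 : 0 ≤ R' := le_max_right _ _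
    -- the compact "cylinder"
    set C : Set G := h ⁻¹' (univ ×ˢ closedBall (0:E) R') with hC
    have hCcomp : IsCompact C := by
      have : C = h.symm '' (univ ×ˢ closedBall (0:E) R') := by
        rw [Homeomorph.image_symm, hC]
      rw [this]
      exact (isCompact_univ.prod (isCompact_closedBall _ _)).image h.symm.continuous
    have hCclosed : IsClosed C :=
      (isClosed_univ.prod isClosed_closedBall).preimage h.continuous
    -- the outer set
    set S : Set G := h ⁻¹' (univ ×ˢ {x : E | R' < ‖x‖}) with hS
    have hmemC : ∀ a : G, a ∈ C ↔ ‖(h a).2‖ ≤ R' := by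
      intro a
      simp [hC, Set.mem_preimage, Set.mem_prod, mem_closedBall, dist_zero_right]
    have hmemS : ∀ a : G, a ∈ S ↔ R' < ‖(h a).2‖ := by
      intro a
      simp [hS, Set.mem_preimage, Set.mem_prod]
    -- frontier A ⊆ C
    have hfrC : frontier A ⊆ C := by
      intro a ha
      rw [hmemC]
      have hmem : (h a).2 ∈ closedBall (0:E) R := hRsub ⟨a, ha, rfl⟩
      rw [mem_closedBall, dist_zero_right] at hmem
      exact hmem.trans (le_max_left _ _)
    -- connectedness of K
    haveI : ConnectedSpace K := by
      have hsurj : Function.Surjective (fun g : G => (h g).1) := by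
        intro k
        exact ⟨h.symm (k, 0), by simp⟩
      exact hsurj.connectedSpace (continuous_fst.comp h.continuous)
    -- S connected
    have hSconn : IsConnected S := by
      have h1 : IsConnected ((univ : Set K) ×ˢ {x : E | R' < ‖x‖}) :=
        IsConnected.prod (isConnected_univ) (my_isConnected_norm_gt hrank hR'0)
      have : S = h.symm '' ((univ : Set K) ×ˢ {x : E | R' < ‖x‖}) := by
        rw [Homeomorph.image_symm, hS]
      rw [this]
      exact h1.image _ h.symm.continuous.continuousOn
    -- int A meets S
    have hintS : (interior A ∩ S).Nonempty := by
      by_contra hcon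
      rw [Set.not_nonempty_iff_eq_empty] at hcon
      have hsub : interior A ⊆ C := by
        intro a ha
        rw [hmemC]
        by_contra hle
        push_neg at hle
        exact Set.eq_empty_iff_forall_notMem.mp hcon a ⟨ha, (hmemS a).mpr hle⟩
      have h2 : closure (interior P) ⊆ C :=
        closure_minimal ((interior_mono hPsubA).trans hsub) hCclosed
      exact hΩnc (hCcomp.of_isClosed_subset isClosed_closure h2)
    -- Aᶜ meets S
    have hcompS : (Aᶜ ∩ S).Nonempty := by
      by_contra hcon
      rw [Set.not_nonempty_iff_eq_empty] at hcon
      have hsub : Aᶜ ⊆ C := by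
        intro a ha
        rw [hmemC]
        by_contra hle
        push_neg at hle
        exact Set.eq_empty_iff_forall_notMem.mp hcon a ⟨ha, (hmemS a).mpr hle⟩
      obtain ⟨g, hg⟩ := hAc
      set f : G ≃ₜ G := (Homeomorph.inv G).trans (Homeomorph.mulLeft g) with hf
      have hfa : ∀ w : G, f w = g * w⁻¹ := fun w => rfl
      have himg : {y : G | ∃ w ∈ interior P, y = g * w⁻¹} = f '' interior P := by
        ext y
        constructor
        · rintro ⟨w, hw, rfl⟩; exact ⟨w, hw, (hfa w).symm⟩
        · rintro ⟨w, hw, rfl⟩; exact ⟨w, hw, hfa w⟩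
      have h2 : f '' closure (interior P) ⊆ C := by
        rw [Homeomorph.image_closure]
        refine closure_minimal ?_ hCclosed
        rw [← himg]
        exact hg.trans hsub
      have h3 : IsCompact (f '' closure (interior P)) :=
        hCcomp.of_isClosed_subset
          ((f.isClosedMap _ isClosed_closure)) h2
      have h4 : IsCompact (closure (interior P)) := by
        have : closure (interior P) = f.symm '' (f '' closure (interior P)) := by
          rw [Set.image_image]; simp
        rw [this]
        exact h3.image f.symm.continuous
      exact hΩnc h4
    -- S avoids frontier A, is covered by interior A and Aᶜ
    have hcover : S ⊆ interior A ∪ Aᶜ := by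
      intro a ha
      by_cases hA : a ∈ A
      · left
        by_contra hint
        have hfr : a ∈ frontier A := by
          rw [hAclosed.frontier_eq]
          exact ⟨hA, hint⟩
        have := hfrC hfr
        rw [hmemC] at this
        rw [hmemS] at ha
        linarith
      · exact Or.inr hA
    have := hSconn.isPreconnected (u := interior A) (v := Aᶜ) isOpen_interior
      hAclosed.isOpen_compl hcover
      (by obtain ⟨a, h1, h2⟩ := hintS; exact ⟨a, h2, h1⟩)
      (by obtain ⟨a, h1, h2⟩ := hcompS; exact ⟨a, h2, h1⟩)
    obtain ⟨a, _, ha1, ha2⟩ := this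
    exact ha2 (interior_subset ha1)

theorem compact_boundary_implies_dim_one
    {G : Type*} [Group G] [TopologicalSpace G] [IsTopologicalGroup G]
    [ConnectedSpace G]
    {K : Type*} [TopologicalSpace K] [CompactSpace K]
    {n : ℕ} (h : G ≃ₜ K × EuclideanSpace ℝ (Fin n))
    (P : Set G) (hone : (1 : G) ∈ P) (hPclosed : IsClosed P)
    (hmul : ∀ x ∈ P, ∀ y ∈ P, x * y ∈ P)
    (hΩne : (interior P).Nonempty)
    (hΩnc : ¬ IsCompact (closure (interior P)))
    (A : Set G) (hAne : A.Nonempty) (hAproper : A ≠ Set.univ)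
    (hAclosed : IsClosed A)
    (hPA : ∀ p ∈ P, ∀ x ∈ A, p * x ∈ A)
    (hPsubA : P ⊆ A)
    (hAc : ∃ g : G, {y : G | ∃ w ∈ interior P, y = g * w⁻¹} ⊆ Aᶜ)
    (hbd : IsCompact (frontier A)) :
    n = 1 := by
  exact my_main h P hΩnc A hAclosed hPsubA hAc hbd
end

section
/- Let P be a spanning pointed closed convex cone in ℝ^d (d ≥ 2), let P* = {y : ⟨x, y⟩ ≥ 0 for all x ∈ P} be its dual cone, and let e ∈ int(P*) with ‖e‖ = 1. Let N ⊆ (span{e})^⊥ be a discrete subgroup of rank d−1. Then for every closed subset F ⊆ P, the set F + N is closed in ℝ^d. -/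
open Pointwise

theorem closed_plus_discrete_subgroup_closed
    {d : ℕ} (hd : 2 ≤ d)
    (P : Set (EuclideanSpace ℝ (Fin d)))
    (hclosed : IsClosed P) (h0 : (0 : EuclideanSpace ℝ (Fin d)) ∈ P)
    (hadd : ∀ x ∈ P, ∀ y ∈ P, x + y ∈ P)
    (hsmul : ∀ t : ℝ, 0 ≤ t → ∀ x ∈ P, t • x ∈ P)
    (hspan : Submodule.span ℝ P = ⊤)
    (hpointed : P ∩ (-P) = {0})
    (e : EuclideanSpace ℝ (Fin d))
    (he : e ∈ interior {y : EuclideanSpace ℝ (Fin d) |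
      ∀ x ∈ P, 0 ≤ (inner ℝ x y : ℝ)})
    (hnorme : ‖e‖ = 1)
    (N : AddSubgroup (EuclideanSpace ℝ (Fin d)))
    (hNperp : ∀ m ∈ N, (inner ℝ m e : ℝ) = 0)
    (hNdisc : DiscreteTopology N)
    (hNrank : ∃ b : Module.Basis (Fin (d - 1)) ℤ N, True) :
    ∀ F : Set (EuclideanSpace ℝ (Fin d)), F ⊆ P → IsClosed F →
      IsClosed (F + (N : Set (EuclideanSpace ℝ (Fin d)))) := by
  intro F hFP hF
  -- get ε with ball e ε ⊆ dual cone
  obtain ⟨ε, hεpos, hball⟩ := Metric.isOpen_iff.mp isOpen_interior e he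
  -- key coercivity: (ε/2) * ‖x‖ ≤ ⟨x, e⟩ for x ∈ P
  have key : ∀ x ∈ P, (ε / 2) * ‖x‖ ≤ (inner ℝ x e : ℝ) := by
    intro x hx
    rcases eq_or_ne x 0 with rfl | hx0
    · simp
    · have hnx : (0:ℝ) < ‖x‖ := norm_pos_iff.mpr hx0
      set c : ℝ := (ε / 2) / ‖x‖ with hc
      have hy : e - c • x ∈ Metric.ball e ε := by
        rw [Metric.mem_ball, dist_eq_norm]
        have : e - c • x - e = -(c • x) := by abel
        rw [this, norm_neg, norm_smul, Real.norm_eq_abs,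
          abs_of_nonneg (by positivity)]
        rw [hc]
        rw [div_mul_cancel₀ _ (ne_of_gt hnx)]
        linarith
      have hy2 := interior_subset (hball hy)
      have h0le : (0:ℝ) ≤ inner ℝ x (e - c • x) := hy2 x hx
      rw [inner_sub_right, real_inner_smul_right, real_inner_self_eq_norm_sq] at h0le
      have : c * ‖x‖ ^ 2 = (ε / 2) * ‖x‖ := by
        rw [hc]; field_simp
      linarith [h0le, this.symm ▸ h0le]
  -- sequential closedness
  apply IsSeqClosed.isClosed
  intro u z hu huz
  choose f hfF m hmN hfm using fun n => Set.mem_add.mp (hu n)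
  -- ⟨f n, e⟩ = ⟨u n, e⟩
  have hinner : ∀ n, (inner ℝ (f n) e : ℝ) = inner ℝ (u n) e := by
    intro n
    rw [← hfm n, inner_add_left, hNperp _ (hmN n), add_zero]
  have htend : Filter.Tendsto (fun n => (inner ℝ (u n) e : ℝ)) Filter.atTop
      (nhds (inner ℝ z e)) := huz.inner tendsto_const_nhds
  obtain ⟨C, hC⟩ := htend.bddAbove_range
  have hCle : ∀ n, (inner ℝ (u n) e : ℝ) ≤ C := fun n =>
    hC (Set.mem_range_self n)
  have hfb : ∀ n, f n ∈ Metric.closedBall (0 : EuclideanSpace ℝ (Fin d))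
      (C / (ε / 2)) := by
    intro n
    have h1 : (ε / 2) * ‖f n‖ ≤ C := by
      calc (ε / 2) * ‖f n‖ ≤ inner ℝ (f n) e := key _ (hFP (hfF n))
        _ = inner ℝ (u n) e := hinner n
        _ ≤ C := hCle n
    rw [Metric.mem_closedBall, dist_zero_right]
    rw [le_div_iff₀ (by linarith)]
    linarith [h1, mul_comm (ε / 2) ‖f n‖]
  obtain ⟨x, -, φ, hφ, hxlim⟩ :=
    tendsto_subseq_of_bounded Metric.isBounded_closedBall hfb
  have hxF : x ∈ F := hF.isSeqClosed (fun n => hfF (φ n)) hxlim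
  have hmlim : Filter.Tendsto (fun n => m (φ n)) Filter.atTop (nhds (z - x)) := by
    have : (fun n => m (φ n)) = fun n => u (φ n) - f (φ n) := by
      funext n
      rw [← hfm (φ n)]; abel
    rw [this]
    exact (huz.comp hφ.tendsto_atTop).sub hxlim
  haveI := hNdisc
  have hNclosed : IsClosed (N : Set (EuclideanSpace ℝ (Fin d))) :=
    AddSubgroup.isClosed_of_discrete
  have hzx : z - x ∈ N := hNclosed.isSeqClosed (fun n => hmN (φ n)) hmlim
  exact Set.mem_add.mpr ⟨x, hxF, z - x, hzx, by abel⟩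
end
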